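/- arXiv:2404.05612 — 2 statements merged into one kernel-verified Lean document; each statement's English description precedes it below -/
import Mathlib

section
/- Let ζ ∈ (0,1), ε > 0, and let a, b > 0. Then (a - b) · (a^{-(1-ζ)} - b^{-(1-ζ)}) ≤ - (4(1-ζ)/ζ²) · ((a - b)/(a - b)) · (a^{ζ/2} - b^{ζ/2})², i.e. for all a, b > 0 with a ≠ b one has (a - b)(a^{-(1-ζ)} - b^{-(1-ζ)}) ≤ -(4(1-ζ)/ζ²)(a^{ζ/2} - b^{ζ/2})². -/
open Real Set

lemma aux_nonneg {F F' : ℝ → ℝ}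
    (hd : ∀ x, 1 ≤ x → HasDerivAt F (F' x) x)
    (h0 : F 1 = 0) (hpos : ∀ x, 1 < x → 0 ≤ F' x) :
    ∀ s, 1 ≤ s → 0 ≤ F s := by
  have mono : MonotoneOn F (Set.Ici 1) := by
    apply monotoneOn_of_deriv_nonneg (convex_Ici 1)
    · exact fun x hx => (hd x hx).continuousAt.continuousWithinAt
    · intro x hx
      rw [interior_Ici] at hx
      exact (hd x hx.le).differentiableAt.differentiableWithinAt
    · intro x hx
      rw [interior_Ici] at hx
      rw [(hd x hx.le).deriv]
      exact hpos x hx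
  intro s hs
  rw [← h0]
  exact mono (by norm_num) hs hs

lemma k_hasDeriv (p : ℝ) (x : ℝ) (hx : 0 < x) :
    HasDerivAt (fun s : ℝ => s ^ (p-1) - (p-1)*s + (p-2))
      ((p-1) * x ^ (p-2) - (p-1)) x := by
  have e : p - 1 - 1 = p - 2 := by ring
  have h1 : HasDerivAt (fun s : ℝ => s ^ (p-1)) ((p-1) * x ^ (p-2)) x := by
    have := Real.hasDerivAt_rpow_const (p := p - 1) (Or.inl hx.ne')
    rwa [e] at this
  have h2 : HasDerivAt (fun s : ℝ => (p-1)*s) (p-1) x := by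
    simpa using (hasDerivAt_id x).const_mul (p-1)
  exact (h1.sub h2).add_const _

lemma k_nonneg (p : ℝ) (hp : 2 < p) : ∀ s, 1 ≤ s →
    0 ≤ s ^ (p-1) - (p-1)*s + (p-2) := by
  apply aux_nonneg (F' := fun x => (p-1) * x ^ (p-2) - (p-1))
  · intro x hx; exact k_hasDeriv p x (by linarith)
  · simp only [Real.one_rpow]; ring
  · intro x hx
    have : (1:ℝ) ≤ x ^ (p-2) := Real.one_le_rpow hx.le (by linarith)
    nlinarith

lemma g_nonneg (p : ℝ) (hp : 2 < p) : ∀ s, 1 ≤ s →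
    0 ≤ (2*p-2)*s^p - p*s^2 - (p-2) - p*(p-2)*(s-1)*(p*s-(p-2)) := by
  apply aux_nonneg
    (F' := fun x => (2*p-2)*(p*x^(p-1)) - p*(2*x) - p*(p-2)*((p*x-(p-2)) + p*(x-1)))
  · intro x hx
    have hx0 : (0:ℝ) < x := by linarith
    have h1 : HasDerivAt (fun s : ℝ => s ^ p) (p * x ^ (p-1)) x :=
      Real.hasDerivAt_rpow_const (Or.inl hx0.ne')
    have h2 : HasDerivAt (fun s : ℝ => s ^ 2) (2*x) x := by
      simpa using hasDerivAt_pow 2 x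
    have h3 : HasDerivAt (fun s : ℝ => (s-1)*(p*s-(p-2)))
        ((p*x-(p-2)) + p*(x-1)) x := by
      have h := (((hasDerivAt_id x).sub_const 1).mul
        (((hasDerivAt_id x).const_mul p).sub_const (p-2)))
      simp only [id_eq] at h
      exact h.congr_deriv (by ring)
    have h := (((h1.const_mul (2*p-2)).sub (h2.const_mul p)).sub_const (p-2)).sub
      (h3.const_mul (p*(p-2)))
    have hfun : (fun s : ℝ => (2*p-2)*s^p - p*s^2 - (p-2) - p*(p-2)*(s-1)*(p*s-(p-2)))
        = fun s : ℝ => ((2*p-2)*s^p - p*s^2 - (p-2)) - (p*(p-2))*((s-1)*(p*s-(p-2))) := by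
      ext s; ring
    rw [hfun]
    exact h
  · simp only [Real.one_rpow, one_pow]; ring
  · intro x hx
    have hk := k_nonneg p hp x hx.le
    have e : (2*p-2)*(p*x^(p-1)) - p*(2*x) - p*(p-2)*((p*x-(p-2)) + p*(x-1))
        = (2*p*(p-1)) * (x ^ (p-1) - (p-1)*x + (p-2)) := by ring
    rw [e]
    exact mul_nonneg (by nlinarith) hk

lemma f_nonneg (p : ℝ) (hp : 2 < p) : ∀ s, 1 ≤ s →
    0 ≤ (s^p - 1)*(s^(p-2) - 1) - p*(p-2)*(s-1)^2*s^(p-2) := by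
  apply aux_nonneg
    (F' := fun x => ((p*x^(p-1))*(x^(p-2)-1) + (x^p-1)*((p-2)*x^(p-3)))
      - p*(p-2)*((2*(x-1))*x^(p-2) + (x-1)^2*((p-2)*x^(p-3))))
  · intro x hx
    have hx0 : (0:ℝ) < x := by linarith
    have hA : HasDerivAt (fun s : ℝ => s ^ p) (p * x ^ (p-1)) x :=
      Real.hasDerivAt_rpow_const (Or.inl hx0.ne')
    have hB : HasDerivAt (fun s : ℝ => s ^ (p-2)) ((p-2) * x ^ (p-3)) x := by
      have h := Real.hasDerivAt_rpow_const (p := p - 2) (x := x) (Or.inl hx0.ne')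
      have e : p - 2 - 1 = p - 3 := by ring
      rwa [e] at h
    have hsq : HasDerivAt (fun s : ℝ => (s-1)^2) (2*(x-1)) x := by
      have h := ((hasDerivAt_id x).sub_const 1).pow 2
      simp at h
      exact h
    have term1 := (hA.sub_const 1).mul (hB.sub_const 1)
    have term2 := (hsq.mul hB).const_mul (p*(p-2))
    have h := term1.sub term2
    convert h using 1
    · rfl
    · rfl
    · ext s; simp only [Pi.mul_apply, Pi.sub_apply]; ring
  · simp only [Real.one_rpow]; ring
  · intro x hx
    have hx0 : (0:ℝ) < x := by linarith
    have hg := g_nonneg p hp x hx.le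
    have hB : (0:ℝ) ≤ x ^ (p-3) := Real.rpow_nonneg hx0.le _
    have h0 : x ^ p = x ^ (p-3) * x^3 := by
      rw [← Real.rpow_natCast x 3, ← Real.rpow_add hx0]; congr 1; push_cast; ring
    have h1 : x ^ (p-1) = x ^ (p-3) * x^2 := by
      rw [← Real.rpow_natCast x 2, ← Real.rpow_add hx0]; congr 1; push_cast; ring
    have h2 : x ^ (p-2) = x ^ (p-3) * x := by
      have h : x ^ (p-2) = x ^ (p-3) * x ^ (1:ℝ) := by
        rw [← Real.rpow_add hx0]; congr 1; ring
      simpa using h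
    rw [h0] at hg
    rw [h0, h1, h2]
    nlinarith [mul_nonneg hB hg]

lemma main_aux (ζ : ℝ) (hζ0 : 0 < ζ) (hζ1 : ζ < 1) (a b : ℝ) (hb : 0 < b) (hba : b < a) :
    (a - b) * (a ^ (ζ-1) - b ^ (ζ-1)) ≤
      -(4 * (1 - ζ) / ζ ^ 2) * (a ^ (ζ / 2) - b ^ (ζ / 2)) ^ 2 := by
  have ha : 0 < a := hb.trans hba
  set p : ℝ := 2/ζ with hpdef
  have hp : 2 < p := by
    rw [hpdef, lt_div_iff₀ hζ0]; linarith
  set T : ℝ := a/b with hTdef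
  have hT1 : 1 < T := (one_lt_div hb).2 hba
  have hT0 : 0 < T := by linarith
  set s : ℝ := T ^ (ζ/2) with hsdef
  have hs1 : 1 < s := Real.one_lt_rpow_iff_of_pos hT0 |>.2 (Or.inl ⟨hT1, by linarith⟩)
  have hsp : s ^ p = T := by
    rw [hsdef, ← Real.rpow_mul hT0.le]
    rw [show ζ/2 * p = 1 by rw [hpdef]; field_simp]
    exact Real.rpow_one T
  have hsp2 : s ^ (p-2) = T ^ (1-ζ) := by
    rw [hsdef, ← Real.rpow_mul hT0.le]
    congr 1
    rw [hpdef]; field_simp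
  set D : ℝ := s ^ (p-2) with hDdef
  have hD : 0 < D := Real.rpow_pos_of_pos (by linarith) _
  have hTz : T ^ (ζ-1) = D⁻¹ := by
    rw [hsp2, ← Real.rpow_neg hT0.le]
    congr 1; ring
  have hf := f_nonneg p hp s hs1.le
  rw [hsp, ← hDdef] at hf
  -- step inequality in T, s
  have hstep : (T-1)*(T^(ζ-1)-1) ≤ -(p*(p-2))*(s-1)^2 := by
    rw [hTz]
    have h5 : (T-1)*(D⁻¹ - 1) = -(((T - 1) * (D - 1)) / D) := by
      field_simp; ring
    have h6 : p*(p-2)*(s-1)^2 ≤ ((T-1)*(D-1))/D := by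
      rw [le_div_iff₀ hD]; nlinarith [hf]
    rw [h5]; linarith
  -- translate to a, b
  have hbz : (0:ℝ) < b ^ ζ := Real.rpow_pos_of_pos hb _
  have hTr : T ^ (ζ-1) = a^(ζ-1) / b^(ζ-1) := by
    rw [hTdef]; exact Real.div_rpow ha.le hb.le _
  have hTr2 : s = a^(ζ/2) / b^(ζ/2) := by
    rw [hsdef, hTdef]; exact Real.div_rpow ha.le hb.le _
  have hbb1 : b * b^(ζ-1) = b^ζ := by
    nth_rewrite 1 [← Real.rpow_one b]
    rw [← Real.rpow_add hb]; norm_num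
  have hbb2 : b^(ζ/2) * b^(ζ/2) = b^ζ := by
    rw [← Real.rpow_add hb]; congr 1; ring
  have hb1 : (0:ℝ) < b^(ζ-1) := Real.rpow_pos_of_pos hb _
  have hb2 : (0:ℝ) < b^(ζ/2) := Real.rpow_pos_of_pos hb _
  have hE1 : (a-b) * (a^(ζ-1) - b^(ζ-1)) = b^ζ * ((T-1)*(T^(ζ-1)-1)) := by
    rw [hTr, hTdef, ← hbb1]
    field_simp
  have hE2 : (a^(ζ/2) - b^(ζ/2))^2 = b^ζ * (s-1)^2 := by
    rw [hTr2, ← hbb2]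
    field_simp
  have hc : 4 * (1 - ζ) / ζ ^ 2 = p*(p-2) := by
    rw [hpdef]; field_simp; ring
  rw [hE1, hE2, hc]
  nlinarith [mul_le_mul_of_nonneg_left hstep hbz.le]

/-- Concavity estimate (3.1): for ζ ∈ (0,1) and a, b > 0 with a ≠ b,
(a - b)(a^{-(1-ζ)} - b^{-(1-ζ)}) ≤ -(4(1-ζ)/ζ²)(a^{ζ/2} - b^{ζ/2})². -/
theorem stmt_0 (ζ : ℝ) (hζ : ζ ∈ Set.Ioo (0:ℝ) 1) (ε : ℝ) (hε : 0 < ε)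
    (a b : ℝ) (ha : 0 < a) (hb : 0 < b) (hab : a ≠ b) :
    (a - b) * (a ^ (-(1 - ζ)) - b ^ (-(1 - ζ))) ≤
      -(4 * (1 - ζ) / ζ ^ 2) * (a ^ (ζ / 2) - b ^ (ζ / 2)) ^ 2 := by
  obtain ⟨hζ0, hζ1⟩ := hζ
  have he : -(1 - ζ) = ζ - 1 := by ring
  rw [he]
  rcases lt_or_gt_of_ne hab with h | h
  · have := main_aux ζ hζ0 hζ1 b a ha h
    have e1 : (a - b) * (a^(ζ-1) - b^(ζ-1)) = (b - a) * (b^(ζ-1) - a^(ζ-1)) := by ring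
    have e2 : (a^(ζ/2) - b^(ζ/2))^2 = (b^(ζ/2) - a^(ζ/2))^2 := by ring
    rw [e1, e2]
    exact this
  · exact main_aux ζ hζ0 hζ1 a b hb h
end

section
/- Let ζ ∈ (0,1) and a, b > 0 with a ≠ b. Then min{a^{-(1-ζ)}, b^{-(1-ζ)}} · |a - b| ≤ (2/ζ) · max{a^{ζ/2}, b^{ζ/2}} · |a^{ζ/2} - b^{ζ/2}|. -/
/-- Estimate (3.2): for ζ ∈ (0,1) and a, b > 0 with a ≠ b,
min{a^{-(1-ζ)}, b^{-(1-ζ)}}·|a - b| ≤ (2/ζ)·max{a^{ζ/2}, b^{ζ/2}}·|a^{ζ/2} - b^{ζ/2}|. -/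
theorem stmt_1 (ζ a b : ℝ) (hζ : ζ ∈ Set.Ioo (0:ℝ) 1) (ha : 0 < a) (hb : 0 < b)
    (hab : a ≠ b) :
    min (a ^ (-(1 - ζ))) (b ^ (-(1 - ζ))) * |a - b| ≤
      (2 / ζ) * max (a ^ (ζ / 2)) (b ^ (ζ / 2)) * |a ^ (ζ / 2) - b ^ (ζ / 2)| := by
  obtain ⟨hζ0, hζ1⟩ := hζ
  wlog hlt : a < b generalizing a b
  · have h := this b a hb ha hab.symm
      (lt_of_le_of_ne (not_lt.mp hlt) hab.symm)
    simpa [min_comm, max_comm, abs_sub_comm] using h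
  have hp0 : (0:ℝ) < ζ / 2 := by linarith
  have hmin : min (a ^ (-(1 - ζ))) (b ^ (-(1 - ζ))) = b ^ (-(1 - ζ)) :=
    min_eq_right (Real.rpow_le_rpow_of_nonpos ha hlt.le (by linarith))
  have hmax : max (a ^ (ζ / 2)) (b ^ (ζ / 2)) = b ^ (ζ / 2) :=
    max_eq_right (Real.rpow_le_rpow ha.le hlt.le hp0.le)
  have hrlt : a ^ (ζ / 2) < b ^ (ζ / 2) :=
    Real.rpow_lt_rpow ha.le hlt hp0
  rw [hmin, hmax, abs_of_neg (by linarith), abs_of_neg (by linarith)]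
  -- key Bernoulli-type estimate: a^p ≤ b^p + p * b^(p-1) * (a - b), p = ζ/2
  have hs : -1 ≤ a / b - 1 := by
    have : 0 < a / b := div_pos ha hb
    linarith
  have key := rpow_one_add_le_one_add_mul_self hs hp0.le (by linarith)
  rw [add_sub_cancel] at key
  -- key : (a/b)^(ζ/2) ≤ 1 + (ζ/2) * (a/b - 1)
  have hbp : (0:ℝ) < b ^ (ζ / 2) := Real.rpow_pos_of_pos hb _
  have hdiv : (a / b) ^ (ζ / 2) = a ^ (ζ / 2) / b ^ (ζ / 2) :=
    Real.div_rpow ha.le hb.le (ζ / 2)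
  have key2 : a ^ (ζ / 2) ≤ b ^ (ζ / 2) * (1 + (ζ / 2) * (a / b - 1)) := by
    rw [hdiv] at key
    calc a ^ (ζ / 2) = b ^ (ζ / 2) * (a ^ (ζ / 2) / b ^ (ζ / 2)) := by
          field_simp
      _ ≤ b ^ (ζ / 2) * (1 + ζ / 2 * (a / b - 1)) := by
          exact mul_le_mul_of_nonneg_left key hbp.le
  -- hence b^(ζ/2) - a^(ζ/2) ≥ (ζ/2) * b^(ζ/2) * (b - a) / b
  have key3 : (ζ / 2) * (b ^ (ζ / 2) / b) * (b - a) ≤ b ^ (ζ / 2) - a ^ (ζ / 2) := by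
    have h1 : b ^ (ζ / 2) * (1 + (ζ / 2) * (a / b - 1))
        = b ^ (ζ / 2) - (ζ / 2) * (b ^ (ζ / 2) / b) * (b - a) := by
      field_simp
      ring
    linarith [key2.trans_eq h1]
  -- rewrite b^(-(1-ζ)) = b^(ζ/2) * (b^(ζ/2)/b)
  have hrw : b ^ (-(1 - ζ)) = b ^ (ζ / 2) * (b ^ (ζ / 2) / b) := by
    have h1 : b ^ (ζ / 2) * (b ^ (ζ / 2) / b) = b ^ (ζ / 2 + ζ / 2) / b ^ (1:ℝ) := by
      rw [Real.rpow_add hb, Real.rpow_one]; ring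
    rw [h1, ← Real.rpow_sub hb]
    norm_num
  rw [hrw, show -(a - b) = b - a from by ring,
    show -(a ^ (ζ / 2) - b ^ (ζ / 2)) = b ^ (ζ / 2) - a ^ (ζ / 2) from by ring]
  have hcalc : 2 / ζ * b ^ (ζ / 2) * (b ^ (ζ / 2) - a ^ (ζ / 2))
      ≥ 2 / ζ * b ^ (ζ / 2) * ((ζ / 2) * (b ^ (ζ / 2) / b) * (b - a)) := by
    apply mul_le_mul_of_nonneg_left key3
    positivity
  calc b ^ (ζ / 2) * (b ^ (ζ / 2) / b) * (b - a)
      = 2 / ζ * b ^ (ζ / 2) * ((ζ / 2) * (b ^ (ζ / 2) / b) * (b - a)) := by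
        field_simp
    _ ≤ 2 / ζ * b ^ (ζ / 2) * (b ^ (ζ / 2) - a ^ (ζ / 2)) := hcalc
end
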